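/- Let n ≥ 2. Let s ∈ SL(n,ℂ) be the inverse of the matrix s⁻¹ with (s⁻¹)_{i,i+1} = −1 for 1 ≤ i ≤ n−1, (s⁻¹)_{n,1} = 1 and 0 elsewhere, and let f ∈ SL(n,ℂ) be the upper bidiagonal matrix with f_{i,i} = 1 for all i, f_{i,i+1} = −1 for 1 ≤ i ≤ n−1, and 0 elsewhere. For every diagonal matrix x = diag(x₁,…,xₙ) with x₁x₂···xₙ = 1, the matrix i(x) := x·f·(s x⁻¹ s⁻¹) equals the upper bidiagonal matrix with diagonal entries (x₁x_n⁻¹, x₂x₁⁻¹, …, x_n x_{n−1}⁻¹) and with −1 in the entries (i,i+1), and moreover i(x) lies in N s⁻¹ N ∩ B̄, i.e. i(x) is upper triangular and can be written as i(x) = v·s⁻¹·u with v a lower unipotent matrix equal to the identity outside its last row and u a lower unipotent matrix. -/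
import Mathlib

/-- A matrix is lower unipotent if it is lower triangular with all diagonal
entries equal to `1`. -/
def LowerUnipotent {n : ℕ} (A : Matrix (Fin n) (Fin n) ℂ) : Prop :=
  (∀ i, A i i = 1) ∧ ∀ i j : Fin n, (i : ℕ) < (j : ℕ) → A i j = 0

/-- `v ∈ N′`: `v` is lower unipotent and agrees with the identity matrix in all
rows except possibly the last one. -/
def InNPrime {n : ℕ} (v : Matrix (Fin n) (Fin n) ℂ) : Prop :=
  LowerUnipotent v ∧
    ∀ i j : Fin n, (i : ℕ) ≠ n - 1 → v i j = (1 : Matrix (Fin n) (Fin n) ℂ) i j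

/-- The matrix `s⁻¹` representing (the inverse of) the Coxeter element of `SL(n)`:
`(s⁻¹)_{i,i+1} = -1`, `(s⁻¹)_{n,1} = 1`, and `0` elsewhere. -/
def sInvMat (n : ℕ) : Matrix (Fin n) (Fin n) ℂ := fun i j =>
  if (j : ℕ) = (i : ℕ) + 1 then -1
  else if (i : ℕ) = n - 1 ∧ (j : ℕ) = 0 then 1 else 0

/-- The upper bidiagonal unipotent matrix `f` with `f_{i,i} = 1`,
`f_{i,i+1} = -1`, and `0` elsewhere. -/
def fMat (n : ℕ) : Matrix (Fin n) (Fin n) ℂ := fun i j =>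
  if i = j then 1 else if (j : ℕ) = (i : ℕ) + 1 then -1 else 0

namespace MiuraAux

variable {n : ℕ} [NeZero n]

/-- The sign in row `i` of `sInvMat`. -/
def cc (n : ℕ) (i : Fin n) : ℂ := if (i : ℕ) = n - 1 then 1 else -1

/-- The inverse of `sInvMat`. -/
def sMat (n : ℕ) [NeZero n] : Matrix (Fin n) (Fin n) ℂ := fun i j =>
  if i = j + 1 then cc n j else 0

omit [NeZero n] in
lemma cc_sq (i : Fin n) : cc n i * cc n i = 1 := by
  unfold cc; split <;> norm_num

lemma val_one (hn : 2 ≤ n) : ((1 : Fin n) : ℕ) = 1 := by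
  have h1 : ((1 : Fin n) : ℕ) = 1 % n := Fin.val_one' n
  rw [Nat.mod_eq_of_lt (by omega)] at h1
  exact h1

lemma val_add_one (hn : 2 ≤ n) (i : Fin n) :
    ((i + 1 : Fin n) : ℕ) = if (i : ℕ) = n - 1 then 0 else (i : ℕ) + 1 := by
  have h1 := val_one (n := n) hn
  have h2 : ((i + 1 : Fin n) : ℕ) = ((i : ℕ) + ((1 : Fin n) : ℕ)) % n := by
    rw [Fin.add_def]
  have hi := i.isLt
  rw [h1] at h2
  split
  · next h =>
      rw [h2, h]
      have : n - 1 + 1 = n := by omega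
      rw [this, Nat.mod_self]
  · next h => rw [h2, Nat.mod_eq_of_lt (by omega)]

lemma val_sub_one (hn : 2 ≤ n) (i : Fin n) :
    ((i - 1 : Fin n) : ℕ) = if (i : ℕ) = 0 then n - 1 else (i : ℕ) - 1 := by
  have h1 := val_one (n := n) hn
  have h2 : ((i - 1 : Fin n) : ℕ) = ((n - ((1 : Fin n) : ℕ)) + (i : ℕ)) % n := by
    rw [Fin.sub_def]
  have hi := i.isLt
  rw [h1] at h2
  split
  · next h =>
      rw [h2, h, Nat.add_zero, Nat.mod_eq_of_lt (by omega)]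
  · next h =>
      rw [h2]
      have h3 : n - 1 + (i : ℕ) = n + ((i : ℕ) - 1) := by omega
      rw [h3, Nat.add_mod_left, Nat.mod_eq_of_lt (by omega)]

lemma sInv_apply (hn : 2 ≤ n) (i j : Fin n) :
    sInvMat n i j = if j = i + 1 then cc n i else 0 := by
  have hva := val_add_one hn i
  have hi := i.isLt
  have hj := j.isLt
  unfold sInvMat cc
  by_cases h : j = i + 1
  · subst h
    rw [if_pos rfl]
    by_cases hl : (i : ℕ) = n - 1
    · rw [if_pos hl] at hva
      rw [if_neg (by omega), if_pos ⟨hl, hva⟩, if_pos hl]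
    · rw [if_neg hl] at hva
      rw [if_pos hva, if_neg hl]
  · rw [if_neg h]
    by_cases h1 : (j : ℕ) = (i : ℕ) + 1
    · exfalso
      apply h
      apply Fin.ext
      rw [hva, if_neg (by omega)]; omega
    · rw [if_neg h1]
      by_cases h2 : (i : ℕ) = n - 1 ∧ (j : ℕ) = 0
      · exfalso
        apply h
        apply Fin.ext
        rw [hva, if_pos h2.1]; omega
      · rw [if_neg h2]

lemma sMat_mul_sInv (hn : 2 ≤ n) : sMat n * sInvMat n = 1 := by
  ext i j
  rw [Matrix.mul_apply]
  rw [Fintype.sum_eq_single (i - 1) (fun k hk => by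
    unfold sMat
    rw [if_neg (fun h : i = k + 1 => hk (by rw [h, add_sub_cancel_right])), zero_mul])]
  unfold sMat
  rw [if_pos (by rw [sub_add_cancel] : i = i - 1 + 1), sInv_apply hn, Matrix.one_apply]
  by_cases h : i = j
  · rw [if_pos (by rw [h, sub_add_cancel] : j = i - 1 + 1), if_pos h, cc_sq]
  · rw [if_neg (fun hh : j = i - 1 + 1 => h (by rw [hh, sub_add_cancel])), if_neg h, mul_zero]

lemma sInv_inv (hn : 2 ≤ n) : (sInvMat n)⁻¹ = sMat n :=
  Matrix.inv_eq_left_inv (sMat_mul_sInv hn)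

lemma diag_mul_sInv (hn : 2 ≤ n) (d : Fin n → ℂ) :
    Matrix.diagonal d * sInvMat n = sInvMat n * Matrix.diagonal fun j => d (j - 1) := by
  ext i j
  rw [Matrix.diagonal_mul, Matrix.mul_diagonal, sInv_apply hn]
  by_cases h : j = i + 1
  · subst h
    rw [if_pos rfl, add_sub_cancel_right, mul_comm]
  · rw [if_neg h, mul_zero, zero_mul]

lemma conj_diag (hn : 2 ≤ n) (d : Fin n → ℂ) :
    (sInvMat n)⁻¹ * Matrix.diagonal d * sInvMat n =
      Matrix.diagonal fun j => d (j - 1) := by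
  rw [sInv_inv hn, mul_assoc, diag_mul_sInv hn, ← mul_assoc, sMat_mul_sInv hn, one_mul]

end MiuraAux

open MiuraAux in
theorem miura_embedding_SLn (n : ℕ) (hn : 2 ≤ n) [NeZero n]
    (x : Fin n → ℂ) (hx : ∀ i, x i ≠ 0) (hprod : ∏ i, x i = 1) :
    Matrix.diagonal x * fMat n *
        ((sInvMat n)⁻¹ * Matrix.diagonal (fun i => (x i)⁻¹) * sInvMat n) =
      (fun i j => if i = j then x i * (x (i - 1))⁻¹
        else if (j : ℕ) = (i : ℕ) + 1 then -1 else 0) ∧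
    (∀ i j : Fin n, (j : ℕ) < (i : ℕ) →
      (Matrix.diagonal x * fMat n *
        ((sInvMat n)⁻¹ * Matrix.diagonal (fun i => (x i)⁻¹) * sInvMat n)) i j = 0) ∧
    ∃ v u : Matrix (Fin n) (Fin n) ℂ, InNPrime v ∧ LowerUnipotent u ∧
      Matrix.diagonal x * fMat n *
          ((sInvMat n)⁻¹ * Matrix.diagonal (fun i => (x i)⁻¹) * sInvMat n) =
        v * sInvMat n * u := by
  have key : Matrix.diagonal x * fMat n *
      ((sInvMat n)⁻¹ * Matrix.diagonal (fun i => (x i)⁻¹) * sInvMat n) =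
      (fun i j => if i = j then x i * (x (i - 1))⁻¹
        else if (j : ℕ) = (i : ℕ) + 1 then -1 else 0) := by
    rw [conj_diag hn]
    ext i j
    show (Matrix.diagonal x * fMat n * Matrix.diagonal fun j => (x (j - 1))⁻¹) i j = _
    rw [Matrix.mul_diagonal, Matrix.diagonal_mul]
    unfold fMat
    by_cases h : i = j
    · subst h; simp
    · simp only [if_neg h]
      by_cases h1 : (j : ℕ) = (i : ℕ) + 1
      · have hji : j - 1 = i := by
          apply Fin.ext
          rw [val_sub_one hn, if_neg (by omega)]
          omega
        rw [if_pos h1, hji]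
        linear_combination (-1 : ℂ) * mul_inv_cancel₀ (hx i)
      · rw [if_neg h1, mul_zero, zero_mul]
  refine ⟨key, ?_, ?_⟩
  · intro i j hji
    rw [key]
    show (if i = j then _ else if (j : ℕ) = (i : ℕ) + 1 then (-1 : ℂ) else 0) = 0
    rw [if_neg (fun h => by omega : ¬ i = j), if_neg (by omega)]
  · -- the factorization
    set u : Matrix (Fin n) (Fin n) ℂ := fun i j =>
      if i = j then 1 else if (i : ℕ) = (j : ℕ) + 1 then -(x j * (x (j - 1))⁻¹) else 0 with hu
    set v : Matrix (Fin n) (Fin n) ℂ := fun i j =>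
      if i = j then 1 else if (i : ℕ) = n - 1 then -(x i * (x j)⁻¹) else 0 with hv
    refine ⟨v, u, ⟨⟨fun i => by simp [hv], fun i j hij => ?_⟩, fun i j hine => ?_⟩,
      ⟨fun i => by simp [hu], fun i j hij => ?_⟩, ?_⟩
    · -- v lower triangular
      have hj := j.isLt
      show (if i = j then (1:ℂ) else if (i : ℕ) = n - 1 then _ else 0) = 0
      rw [if_neg (fun h => by omega : ¬ i = j), if_neg (by omega)]
    · -- v = 1 off the last row
      show (if i = j then (1:ℂ) else if (i : ℕ) = n - 1 then _ else 0) = _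
      rw [Matrix.one_apply]
      by_cases h : i = j
      · rw [if_pos h, if_pos h]
      · rw [if_neg h, if_neg h, if_neg hine]
    · -- u lower triangular
      show (if i = j then (1:ℂ) else if (i : ℕ) = (j : ℕ) + 1 then _ else 0) = 0
      rw [if_neg (fun h => by omega : ¬ i = j), if_neg (by omega)]
    · -- the factorization identity
      rw [key]
      have W : ∀ i j : Fin n, (sInvMat n * u) i j = cc n i * u (i + 1) j := by
        intro i j
        rw [Matrix.mul_apply]
        rw [Fintype.sum_eq_single (i + 1) (fun k hk => by
          rw [sInv_apply hn, if_neg hk, zero_mul])]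
        rw [sInv_apply hn, if_pos rfl]
      ext i j
      rw [mul_assoc, Matrix.mul_apply]
      show (if i = j then x i * (x (i - 1))⁻¹
        else if (j : ℕ) = (i : ℕ) + 1 then (-1:ℂ) else 0) = _
      have hi := i.isLt
      have hj := j.isLt
      by_cases hlast : (i : ℕ) = n - 1
      · -- last row
        rw [Fintype.sum_eq_add (j - 1) j
          (fun h => by
            have h0 := val_sub_one hn j
            have hj1 : ((j - 1 : Fin n) : ℕ) = (j : ℕ) := by rw [h]
            rw [h0] at hj1; split at hj1 <;> omega)
          (fun k ⟨hk1, hk2⟩ => by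
            rw [W]
            have hk : u (k + 1) j = 0 := by
              have hka := val_add_one hn k
              have hne : ((k + 1 : Fin n) : ℕ) ≠ (j : ℕ) + 1 := by
                rw [hka]
                split
                · omega
                · intro h
                  exact hk2 (Fin.ext (by omega))
              show (if k + 1 = j then (1:ℂ) else if ((k + 1 : Fin n) : ℕ) = (j : ℕ) + 1
                then _ else 0) = 0
              rw [if_neg (fun h => hk1 (by rw [← h, add_sub_cancel_right])),
                if_neg hne]
            rw [hk, mul_zero, mul_zero])]
        rw [W, W, sub_add_cancel]
        have hujj : u j j = 1 := by
          show (if j = j then (1:ℂ) else _) = 1; rw [if_pos rfl]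
        rw [hujj, mul_one]
        by_cases hij : i = j
        · -- diagonal entry on the last row
          subst hij
          rw [if_pos rfl]
          have hi0 : (i : ℕ) ≠ 0 := by omega
          have hvs := val_sub_one hn i
          rw [if_neg hi0] at hvs
          have h1 : v i (i - 1) = -(x i * (x (i - 1))⁻¹) := by
            show (if i = i - 1 then (1:ℂ) else if (i : ℕ) = n - 1 then _ else 0) = _
            rw [if_neg (fun h => by rw [← h] at hvs; omega), if_pos hlast]
          have h2 : cc n (i - 1) = -1 := by
            unfold cc; rw [if_neg (by omega)]
          have h3 : u (i + 1) i = 0 := by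
            have hka := val_add_one hn i
            rw [if_pos hlast] at hka
            show (if i + 1 = i then (1:ℂ) else if ((i + 1 : Fin n) : ℕ) = (i : ℕ) + 1
              then _ else 0) = 0
            rw [if_neg (fun h => by
                have h9 : ((i + 1 : Fin n) : ℕ) = (i : ℕ) := by rw [h]
                omega),
              if_neg (by omega)]
          have h4 : cc n i = 1 := by unfold cc; rw [if_pos hlast]
          have h5 : v i i = 1 := by
            show (if i = i then (1:ℂ) else _) = 1; rw [if_pos rfl]
          rw [h1, h2, h3, h4, h5]
          ring
        · -- off-diagonal entry on the last row
          rw [if_neg hij, if_neg (by omega)]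
          by_cases hj0 : (j : ℕ) = 0
          · -- j = 0 (wrap-around column)
            have hji : j - 1 = i := by
              apply Fin.ext
              rw [val_sub_one hn j, if_pos hj0]; omega
            have h1 : v i (j - 1) = 1 := by
              rw [hji]; show (if i = i then (1:ℂ) else _) = 1; rw [if_pos rfl]
            have h2 : cc n (j - 1) = 1 := by
              unfold cc; rw [hji, if_pos hlast]
            have h3 : v i j = -(x i * (x j)⁻¹) := by
              show (if i = j then (1:ℂ) else if (i : ℕ) = n - 1 then _ else 0) = _
              rw [if_neg hij, if_pos hlast]
            have h4 : cc n j = -1 := by unfold cc; rw [if_neg (by omega)]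
            have hja : ((j + 1 : Fin n) : ℕ) = (j : ℕ) + 1 := by
              rw [val_add_one hn j, if_neg (by omega)]
            have h5 : u (j + 1) j = -(x j * (x (j - 1))⁻¹) := by
              show (if j + 1 = j then (1:ℂ) else if ((j + 1 : Fin n) : ℕ) = (j : ℕ) + 1
                then _ else 0) = _
              rw [if_neg (fun h => by
                  have h9 : ((j + 1 : Fin n) : ℕ) = (j : ℕ) := by rw [h]
                  omega), if_pos hja]
            have hxji : x (j - 1) = x i := by rw [hji]
            rw [h1, h2, h3, h4, h5, hxji]
            linear_combination (x i * (x i)⁻¹) * inv_mul_cancel₀ (hx j) + mul_inv_cancel₀ (hx i)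
          · -- j ≠ 0, j not last
            have hjl : (j : ℕ) < n - 1 := by omega
            have hvs := val_sub_one hn j
            rw [if_neg hj0] at hvs
            have hji : j - 1 ≠ i := fun h => by rw [h] at hvs; omega
            have h1 : v i (j - 1) = -(x i * (x (j - 1))⁻¹) := by
              show (if i = j - 1 then (1:ℂ) else if (i : ℕ) = n - 1 then _ else 0) = _
              rw [if_neg (fun h => hji h.symm), if_pos hlast]
            have h2 : cc n (j - 1) = -1 := by unfold cc; rw [if_neg (by omega)]
            have h3 : v i j = -(x i * (x j)⁻¹) := by
              show (if i = j then (1:ℂ) else if (i : ℕ) = n - 1 then _ else 0) = _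
              rw [if_neg hij, if_pos hlast]
            have h4 : cc n j = -1 := by unfold cc; rw [if_neg (by omega)]
            have hja : ((j + 1 : Fin n) : ℕ) = (j : ℕ) + 1 := by
              rw [val_add_one hn j, if_neg (by omega)]
            have h5 : u (j + 1) j = -(x j * (x (j - 1))⁻¹) := by
              show (if j + 1 = j then (1:ℂ) else if ((j + 1 : Fin n) : ℕ) = (j : ℕ) + 1
                then _ else 0) = _
              rw [if_neg (fun h => by
                  have h9 : ((j + 1 : Fin n) : ℕ) = (j : ℕ) := by rw [h]
                  omega), if_pos hja]
            rw [h1, h2, h3, h4, h5]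
            linear_combination (x i * (x (j - 1))⁻¹) * inv_mul_cancel₀ (hx j)
      · -- not the last row: v acts as identity
        rw [Fintype.sum_eq_single i (fun k hk => by
          have hvik : v i k = 0 := by
            show (if i = k then (1:ℂ) else if (i : ℕ) = n - 1 then _ else 0) = 0
            rw [if_neg (fun h => hk h.symm), if_neg hlast]
          rw [hvik, zero_mul])]
        have h5 : v i i = 1 := by
          show (if i = i then (1:ℂ) else _) = 1; rw [if_pos rfl]
        rw [h5, one_mul, W]
        have h4 : cc n i = -1 := by unfold cc; rw [if_neg hlast]
        have hia : ((i + 1 : Fin n) : ℕ) = (i : ℕ) + 1 := by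
          rw [val_add_one hn i, if_neg hlast]
        by_cases hij : i = j
        · subst hij
          rw [if_pos rfl]
          have h3 : u (i + 1) i = -(x i * (x (i - 1))⁻¹) := by
            show (if i + 1 = i then (1:ℂ) else if ((i + 1 : Fin n) : ℕ) = (i : ℕ) + 1
              then _ else 0) = _
            rw [if_neg (fun h => by
                have h9 : ((i + 1 : Fin n) : ℕ) = (i : ℕ) := by rw [h]
                omega), if_pos hia]
          rw [h3, h4]; ring
        · rw [if_neg hij]
          by_cases h1 : (j : ℕ) = (i : ℕ) + 1
          · have hji : i + 1 = j := Fin.ext (by rw [hia]; omega)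
            have h3 : u (i + 1) j = 1 := by
              rw [hji]; show (if j = j then (1:ℂ) else _) = 1; rw [if_pos rfl]
            rw [if_pos h1, h3, h4]; ring
          · have h3 : u (i + 1) j = 0 := by
              show (if i + 1 = j then (1:ℂ) else if ((i + 1 : Fin n) : ℕ) = (j : ℕ) + 1
                then _ else 0) = 0
              rw [if_neg (fun h => by
                  have h9 : ((i + 1 : Fin n) : ℕ) = (j : ℕ) := by rw [h]
                  omega),
                if_neg (by rw [hia]; omega)]
            rw [if_neg h1, h3, h4, mul_zero]
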